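/- Let g be an invertible bounded operator on H such that [g,P₊] is Hilbert–Schmidt, and let μ ∈ L¹_res. Then gμg⁻¹ ∈ L¹_res and Tr_res(gμg⁻¹) = Tr_res(μ). -/

import Mathlib

noncomputable section

variable {H : Type*} [NormedAddCommGroup H] [InnerProductSpace ℂ H] [CompleteSpace H]

/-- Hilbert–Schmidt operator (with respect to the Hilbert basis `b`). -/
def IsHS {ι : Type*} (b : HilbertBasis ι ℂ H) (T : H →L[ℂ] H) : Prop :=
  Summable fun i => ‖T (b i)‖ ^ 2

/-- Trace-class operator: a product of two Hilbert–Schmidt operators. -/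
def IsTC {ι : Type*} (b : HilbertBasis ι ℂ H) (T : H →L[ℂ] H) : Prop :=
  ∃ A B : H →L[ℂ] H, IsHS b A ∧ IsHS b B ∧ T = A * B

/-- The trace with respect to the Hilbert basis `b`. -/
def trB {ι : Type*} (b : HilbertBasis ι ℂ H) (T : H →L[ℂ] H) : ℂ :=
  ∑' i, (inner ℂ (b i) (T (b i)) : ℂ)

/-- Membership in the restricted algebra `gl_res`: the commutator `[T, P]` is
Hilbert–Schmidt. -/
def InGlres {ι : Type*} (b : HilbertBasis ι ℂ H) (P T : H →L[ℂ] H) : Prop :=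
  IsHS b (T * P - P * T)

/-- Membership in `L¹_res`: the diagonal blocks `T₊₊ = P T P`, `T₋₋ = (1-P) T (1-P)`
are trace class and the off-diagonal blocks `T₊₋ = P T (1-P)`, `T₋₊ = (1-P) T P`
are Hilbert–Schmidt. -/
def InL1res {ι : Type*} (b : HilbertBasis ι ℂ H) (P T : H →L[ℂ] H) : Prop :=
  IsTC b (P * T * P) ∧ IsTC b ((1 - P) * T * (1 - P)) ∧
    IsHS b (P * T * (1 - P)) ∧ IsHS b ((1 - P) * T * P)

/-- The restricted trace `Tr_res T = Tr T₊₊ + Tr T₋₋`. -/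
def trRes {ι : Type*} (b : HilbertBasis ι ℂ H) (P T : H →L[ℂ] H) : ℂ :=
  trB b (P * T * P) + trB b ((1 - P) * T * (1 - P))

set_option linter.unusedSectionVars false
set_option maxHeartbeats 1600000

local notation "⟪" x ", " y "⟫" => @inner ℂ _ _ x y

namespace StmtAux

variable {ι : Type*} {b : HilbertBasis ι ℂ H}

/-! ### Basic facts about Hilbert–Schmidt operators -/

lemma hasSum_norm_sq (b : HilbertBasis ι ℂ H) (x : H) :
    HasSum (fun i => ‖⟪b i, x⟫‖ ^ 2) (‖x‖ ^ 2) := by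
  have h := b.hasSum_inner_mul_inner x x
  have h' := h.mapL Complex.reCLM
  have e1 : ∀ i, Complex.reCLM (⟪x, b i⟫ * ⟪b i, x⟫) = ‖⟪b i, x⟫‖ ^ 2 := by
    intro i
    rw [← inner_conj_symm (b i) x, RCLike.mul_conj]
    simp only [Complex.reCLM_apply, Complex.ofReal_re, RCLike.norm_conj]
    rw [norm_inner_symm]
    simp [← Complex.ofReal_pow]
  have e2 : Complex.reCLM ⟪x, x⟫ = ‖x‖ ^ 2 := by
    rw [inner_self_eq_norm_sq_to_K]; norm_cast
  simpa only [e1, e2] using h'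

lemma isHS_iff_prod {T : H →L[ℂ] H} :
    IsHS b T ↔ Summable (fun p : ι × ι => ‖⟪b p.2, T (b p.1)⟫‖ ^ 2) := by
  rw [summable_prod_of_nonneg (fun p => by positivity)]
  have key : ∀ i, ∑' j, ‖⟪b j, T (b i)⟫‖ ^ 2 = ‖T (b i)‖ ^ 2 :=
    fun i => (hasSum_norm_sq b (T (b i))).tsum_eq
  constructor
  · intro h
    exact ⟨fun i => (hasSum_norm_sq b (T (b i))).summable,
      h.congr (fun i => (key i).symm)⟩
  · rintro ⟨h1, h2⟩
    exact h2.congr key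

lemma isHS_star {T : H →L[ℂ] H} (hT : IsHS b T) : IsHS b (star T) := by
  rw [isHS_iff_prod] at hT ⊢
  rw [← (Equiv.prodComm ι ι).summable_iff] at hT
  refine hT.congr (fun p => ?_)
  have h1 : ⟪b p.2, (star T) (b p.1)⟫ = ⟪T (b p.2), b p.1⟫ := by
    rw [ContinuousLinearMap.star_eq_adjoint, ContinuousLinearMap.adjoint_inner_right]
  have h2 : ‖⟪T (b p.2), b p.1⟫‖ = ‖⟪b p.1, T (b p.2)⟫‖ := norm_inner_symm _ _
  simp only [Equiv.prodComm_apply, Function.comp_apply, Prod.fst_swap, Prod.snd_swap]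
  rw [h1, h2]

lemma isHS_const_mul {T : H →L[ℂ] H} (hT : IsHS b T) (A : H →L[ℂ] H) : IsHS b (A * T) := by
  refine Summable.of_nonneg_of_le (fun i => by positivity) (fun i => ?_) (hT.mul_left (‖A‖ ^ 2))
  have h1 : ‖(A * T) (b i)‖ ≤ ‖A‖ * ‖T (b i)‖ := A.le_opNorm _
  calc ‖(A * T) (b i)‖ ^ 2 ≤ (‖A‖ * ‖T (b i)‖) ^ 2 := by
        exact pow_le_pow_left₀ (norm_nonneg _) h1 2
    _ = ‖A‖ ^ 2 * ‖T (b i)‖ ^ 2 := by ring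

lemma isHS_mul_const {T : H →L[ℂ] H} (hT : IsHS b T) (A : H →L[ℂ] H) : IsHS b (T * A) := by
  have h := isHS_star (isHS_const_mul (isHS_star hT) (star A))
  rw [star_mul, star_star, star_star] at h
  exact h

lemma isHS_add {S T : H →L[ℂ] H} (hS : IsHS b S) (hT : IsHS b T) : IsHS b (S + T) := by
  refine Summable.of_nonneg_of_le (fun i => by positivity) (fun i => ?_)
    ((hS.add hT).mul_left 2)
  have h1 : ‖(S + T) (b i)‖ ≤ ‖S (b i)‖ + ‖T (b i)‖ := norm_add_le _ _
  calc ‖(S + T) (b i)‖ ^ 2 ≤ (‖S (b i)‖ + ‖T (b i)‖) ^ 2 := by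
        exact pow_le_pow_left₀ (norm_nonneg _) h1 2
    _ ≤ 2 * (‖S (b i)‖ ^ 2 + ‖T (b i)‖ ^ 2) := by nlinarith [sq_nonneg (‖S (b i)‖ - ‖T (b i)‖)]

lemma isHS_neg {T : H →L[ℂ] H} (hT : IsHS b T) : IsHS b (-T) := by
  refine hT.congr (fun i => ?_)
  simp

/-! ### The trace -/

/-- entry function for the product `A * B`. -/
def ent (b : HilbertBasis ι ℂ H) (A B : H →L[ℂ] H) (p : ι × ι) : ℂ :=
  ⟪b p.1, A (b p.2)⟫ * ⟪b p.2, B (b p.1)⟫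

lemma hasSum_diag_entry (A B : H →L[ℂ] H) (i : ι) :
    HasSum (fun j => ent b A B (i, j)) ⟪b i, (A * B) (b i)⟫ := by
  have h := b.hasSum_inner_mul_inner (ContinuousLinearMap.adjoint A (b i)) (B (b i))
  have e1 : ∀ j, ⟪ContinuousLinearMap.adjoint A (b i), b j⟫ = ⟪b i, A (b j)⟫ := fun j =>
    ContinuousLinearMap.adjoint_inner_left A (b j) (b i)
  have e2 : ⟪ContinuousLinearMap.adjoint A (b i), B (b i)⟫ = ⟪b i, (A * B) (b i)⟫ :=
    ContinuousLinearMap.adjoint_inner_left A (B (b i)) (b i)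
  simpa only [ent, e1, e2] using h

lemma summable_ent {A B : H →L[ℂ] H} (hA : IsHS b A) (hB : IsHS b B) :
    Summable (ent b A B) := by
  rw [isHS_iff_prod] at hA hB
  have hA' : Summable (fun p : ι × ι => ‖⟪b p.1, A (b p.2)⟫‖ ^ 2) := by
    rw [← (Equiv.prodComm ι ι).summable_iff] at hA
    exact hA.congr (fun p => rfl)
  refine Summable.of_norm ?_
  refine Summable.of_nonneg_of_le (fun p => norm_nonneg _) (fun p => ?_)
    (((hA'.add hB).mul_left (1/2 : ℝ)))
  have : ‖ent b A B p‖ = ‖⟪b p.1, A (b p.2)⟫‖ * ‖⟪b p.2, B (b p.1)⟫‖ := norm_mul _ _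
  rw [this]
  nlinarith [sq_nonneg (‖⟪b p.1, A (b p.2)⟫‖ - ‖⟪b p.2, B (b p.1)⟫‖),
    norm_nonneg (⟪b p.1, A (b p.2)⟫ : ℂ), norm_nonneg (⟪b p.2, B (b p.1)⟫ : ℂ)]

lemma summable_diag_mul {A B : H →L[ℂ] H} (hA : IsHS b A) (hB : IsHS b B) :
    Summable (fun i => (⟪b i, (A * B) (b i)⟫ : ℂ)) := by
  have h := (summable_ent hA hB).prod
  exact h.congr (fun i => ((hasSum_diag_entry A B i).tsum_eq))

lemma summable_diag_of_eq {X A' B' : H →L[ℂ] H} (hA' : IsHS b A') (hB' : IsHS b B')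
    (hX : X = A' * B') : Summable (fun i => (⟪b i, X (b i)⟫ : ℂ)) := by
  rw [hX]; exact summable_diag_mul hA' hB'

lemma summable_diag_add {X Y : H →L[ℂ] H}
    (hX : Summable (fun i => (⟪b i, X (b i)⟫ : ℂ)))
    (hY : Summable (fun i => (⟪b i, Y (b i)⟫ : ℂ))) :
    Summable (fun i => (⟪b i, (X + Y) (b i)⟫ : ℂ)) := by
  refine (hX.add hY).congr (fun i => ?_)
  simp [inner_add_right]

lemma trB_mul_eq_tsum_ent {A B : H →L[ℂ] H} (hA : IsHS b A) (hB : IsHS b B) :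
    trB b (A * B) = ∑' p, ent b A B p := by
  rw [trB, Summable.tsum_prod (summable_ent hA hB)]
  congr 1
  ext i
  exact ((hasSum_diag_entry A B i).tsum_eq).symm

lemma trB_mul_comm {A B : H →L[ℂ] H} (hA : IsHS b A) (hB : IsHS b B) :
    trB b (A * B) = trB b (B * A) := by
  rw [trB_mul_eq_tsum_ent hA hB, trB_mul_eq_tsum_ent hB hA]
  rw [← (Equiv.prodComm ι ι).tsum_eq (ent b B A)]
  congr 1
  ext p
  simp only [ent, Equiv.prodComm_apply, Prod.fst_swap, Prod.snd_swap]
  ring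

lemma trB_add {X Y : H →L[ℂ] H} (hX : Summable (fun i => (⟪b i, X (b i)⟫ : ℂ)))
    (hY : Summable (fun i => (⟪b i, Y (b i)⟫ : ℂ))) :
    trB b (X + Y) = trB b X + trB b Y := by
  rw [trB, trB, trB, ← Summable.tsum_add hX hY]
  congr 1
  ext i
  simp [inner_add_right]

lemma trB_zero : trB b (0 : H →L[ℂ] H) = 0 := by
  simp [trB]

/-! ### Partial isometries and additivity of the trace class -/

/-- The partial isometry associated with an injection of the index set. -/
def jiso (b : HilbertBasis ι ℂ H) {k : ι → ι} (hk : Function.Injective k) : H →ₗᵢ[ℂ] H :=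
  ((b.orthonormal.comp k hk).orthogonalFamily.linearIsometry).comp b.repr.toLinearIsometry

lemma inner_jiso_right (b : HilbertBasis ι ℂ H) {k : ι → ι} (hk : Function.Injective k)
    (w x : H) (hw : ∀ i, ⟪w, b (k i)⟫ = 0) : ⟪w, jiso b hk x⟫ = 0 := by
  have h := ((b.orthonormal.comp k hk).orthogonalFamily).hasSum_linearIsometry (b.repr x)
  have h2 := h.mapL (innerSL ℂ w)
  have e : ∀ i, (innerSL ℂ w) ((LinearIsometry.toSpanSingleton ℂ H
      ((b.orthonormal.comp k hk).1 i)) (b.repr x i)) = 0 := by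
    intro i
    simp only [LinearIsometry.toSpanSingleton_apply, innerSL_apply_apply,
      inner_smul_right, Function.comp_apply]
    exact mul_eq_zero_of_right _ (hw i)
  have h4 : HasSum (fun _ : ι => (0 : ℂ))
      ((innerSL ℂ w) (((b.orthonormal.comp k hk).orthogonalFamily).linearIsometry (b.repr x))) := by
    simpa only [e] using h2
  have h5 := h4.unique hasSum_zero
  simpa [jiso] using h5

lemma inner_jiso_jiso (b : HilbertBasis ι ℂ H) {k k' : ι → ι} (hk : Function.Injective k)
    (hk' : Function.Injective k') (hdisj : ∀ i j, k i ≠ k' j) (x y : H) :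
    ⟪jiso b hk x, jiso b hk' y⟫ = 0 := by
  have step1 : ∀ j, ⟪jiso b hk x, b (k' j)⟫ = 0 := by
    intro j
    rw [← inner_conj_symm]
    rw [inner_jiso_right b hk (b (k' j)) x
      (fun i => b.orthonormal.2 (fun hcon : k' j = k i => hdisj i j hcon.symm))]
    simp
  exact inner_jiso_right b hk' (jiso b hk x) y step1

lemma star_jiso_mul_jiso (b : HilbertBasis ι ℂ H) {k : ι → ι} (hk : Function.Injective k) :
    star (jiso b hk).toContinuousLinearMap * (jiso b hk).toContinuousLinearMap = 1 := by
  ext x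
  refine ext_inner_left ℂ (fun y => ?_)
  simp only [ContinuousLinearMap.mul_apply, ContinuousLinearMap.star_eq_adjoint,
    ContinuousLinearMap.adjoint_inner_right, ContinuousLinearMap.one_apply,
    LinearIsometry.coe_toContinuousLinearMap]
  exact (jiso b hk).inner_map_map y x

lemma star_jiso_mul_jiso_disj (b : HilbertBasis ι ℂ H) {k k' : ι → ι}
    (hk : Function.Injective k) (hk' : Function.Injective k') (hdisj : ∀ i j, k i ≠ k' j) :
    star (jiso b hk).toContinuousLinearMap * (jiso b hk').toContinuousLinearMap = 0 := by
  ext x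
  refine ext_inner_left ℂ (fun y => ?_)
  simp only [ContinuousLinearMap.mul_apply, ContinuousLinearMap.star_eq_adjoint,
    ContinuousLinearMap.adjoint_inner_right, ContinuousLinearMap.zero_apply, inner_zero_right,
    LinearIsometry.coe_toContinuousLinearMap]
  exact inner_jiso_jiso b hk hk' hdisj y x

lemma isHS_of_isTC {T : H →L[ℂ] H} (h : IsTC b T) : IsHS b T := by
  obtain ⟨A, B, hA, hB, rfl⟩ := h
  exact isHS_const_mul hB A

lemma isTC_add {S T : H →L[ℂ] H} (hS : IsTC b S) (hT : IsTC b T) : IsTC b (S + T) := by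
  obtain ⟨A₁, B₁, hA₁, hB₁, rfl⟩ := hS
  obtain ⟨A₂, B₂, hA₂, hB₂, rfl⟩ := hT
  cases finite_or_infinite ι with
  | inl hfin =>
      exact ⟨A₁ * B₁ + A₂ * B₂, 1, Summable.of_finite, Summable.of_finite, (mul_one _).symm⟩
  | inr hinf =>
      have hcard : Nonempty (Sum ι ι ≃ ι) := by
        rw [← Cardinal.eq]
        simp [Cardinal.mk_sum, Cardinal.add_eq_self (Cardinal.aleph0_le_mk ι)]
      obtain ⟨e⟩ := hcard
      have hk₁ : Function.Injective (e ∘ Sum.inl) := e.injective.comp Sum.inl_injective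
      have hk₂ : Function.Injective (e ∘ Sum.inr) := e.injective.comp Sum.inr_injective
      have hdisj : ∀ i j, (e ∘ Sum.inl) i ≠ (e ∘ Sum.inr) j := fun i j h =>
        Sum.inl_ne_inr (e.injective h)
      have hdisj' : ∀ i j, (e ∘ Sum.inr) i ≠ (e ∘ Sum.inl) j := fun i j h =>
        Sum.inl_ne_inr (e.injective h).symm
      set J₁ := (jiso b hk₁).toContinuousLinearMap with hJ₁
      set J₂ := (jiso b hk₂).toContinuousLinearMap with hJ₂
      have h11 : star J₁ * J₁ = 1 := star_jiso_mul_jiso b hk₁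
      have h22 : star J₂ * J₂ = 1 := star_jiso_mul_jiso b hk₂
      have h12 : star J₁ * J₂ = 0 := star_jiso_mul_jiso_disj b hk₁ hk₂ hdisj
      have h21 : star J₂ * J₁ = 0 := star_jiso_mul_jiso_disj b hk₂ hk₁ hdisj'
      refine ⟨A₁ * star J₁ + A₂ * star J₂, J₁ * B₁ + J₂ * B₂,
        isHS_add (isHS_mul_const hA₁ _) (isHS_mul_const hA₂ _),
        isHS_add (isHS_const_mul hB₁ _) (isHS_const_mul hB₂ _), ?_⟩
      have expand : (A₁ * star J₁ + A₂ * star J₂) * (J₁ * B₁ + J₂ * B₂) =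
          A₁ * (star J₁ * J₁) * B₁ + A₁ * (star J₁ * J₂) * B₂ +
          A₂ * (star J₂ * J₁) * B₁ + A₂ * (star J₂ * J₂) * B₂ := by
        noncomm_ring
      rw [expand, h11, h12, h21, h22]
      simp only [mul_one, mul_zero, zero_mul, add_zero, zero_add]

end StmtAux

namespace StmtAux

variable {ι : Type*} {b : HilbertBasis ι ℂ H}

lemma mu_expand {P Q μ : H →L[ℂ] H} (hPQ1 : P + Q = 1) :
    μ = P*μ*P + P*μ*Q + Q*μ*P + Q*μ*Q := by
  have h0 : (P+Q)*μ*(P+Q) = μ := by rw [hPQ1, one_mul, mul_one]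
  calc μ = (P+Q)*μ*(P+Q) := h0.symm
    _ = P*μ*P + P*μ*Q + Q*μ*P + Q*μ*Q := by noncomm_ring

lemma block_decomp {P Q u v μ : H →L[ℂ] H}
    (hP : P*P = P) (hQ : Q*Q = Q) (hPQ1 : P + Q = 1) :
    P*(u*μ*v)*P =
      (P*u*P)*((P*μ*P)*(P*v*P)) + ((P*u*P)*(P*μ*Q))*(Q*v*P)
      + (P*u*Q)*((Q*μ*P)*(P*v*P)) + (P*u*Q)*((Q*μ*Q)*(Q*v*P)) := by
  have hP' : ∀ x : H →L[ℂ] H, P*(P*x) = P*x := fun x => by rw [← mul_assoc, hP]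
  have hQ' : ∀ x : H →L[ℂ] H, Q*(Q*x) = Q*x := fun x => by rw [← mul_assoc, hQ]
  conv_lhs => rw [mu_expand (μ := μ) hPQ1]
  simp only [mul_add, add_mul, mul_assoc, hP', hQ']

lemma diag_isTC {P Q u v μ A B : H →L[ℂ] H}
    (hP : P*P = P) (hQ : Q*Q = Q) (hPQ1 : P + Q = 1)
    (hAB : P*μ*P = A*B) (hA : IsHS b A) (hB : IsHS b B)
    (hPuQ : IsHS b (P*u*Q)) (hQvP : IsHS b (Q*v*P))
    (hμPQ : IsHS b (P*μ*Q)) (hμQP : IsHS b (Q*μ*P)) :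
    IsTC b (P*(u*μ*v)*P) := by
  rw [block_decomp hP hQ hPQ1]
  refine isTC_add (isTC_add (isTC_add
    ⟨(P*u*P)*A, B*(P*v*P), isHS_const_mul hA _, isHS_mul_const hB _, by rw [hAB]; noncomm_ring⟩
    ⟨(P*u*P)*(P*μ*Q), Q*v*P, isHS_const_mul hμPQ _, hQvP, rfl⟩)
    ⟨P*u*Q, (Q*μ*P)*(P*v*P), hPuQ, isHS_mul_const hμQP _, rfl⟩)
    ⟨P*u*Q, (Q*μ*Q)*(Q*v*P), hPuQ, isHS_const_mul hQvP _, rfl⟩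

lemma diag_trace {P Q u v μ A B : H →L[ℂ] H}
    (hP : P*P = P) (hQ : Q*Q = Q) (hPQ1 : P + Q = 1)
    (hAB : P*μ*P = A*B) (hA : IsHS b A) (hB : IsHS b B)
    (hPuQ : IsHS b (P*u*Q)) (hQvP : IsHS b (Q*v*P))
    (hμPQ : IsHS b (P*μ*Q)) (hμQP : IsHS b (Q*μ*P)) :
    trB b (P*(u*μ*v)*P) =
      trB b ((P*μ*P)*((P*v*P)*(P*u*P))) + trB b ((P*μ*Q)*((Q*v*P)*(P*u*P)))
      + trB b ((Q*μ*P)*((P*v*P)*(P*u*Q))) + trB b ((Q*μ*Q)*((Q*v*P)*(P*u*Q))) := by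
  have hX1 : IsHS b ((P*u*P)*A) := isHS_const_mul hA _
  have hY1 : IsHS b (B*(P*v*P)) := isHS_mul_const hB _
  have e1 : (P*u*P)*((P*μ*P)*(P*v*P)) = ((P*u*P)*A)*(B*(P*v*P)) := by rw [hAB]; noncomm_ring
  have hX2 : IsHS b ((P*u*P)*(P*μ*Q)) := isHS_const_mul hμPQ _
  have s1 : Summable (fun i => (⟪b i, ((P*u*P)*((P*μ*P)*(P*v*P))) (b i)⟫ : ℂ)) :=
    summable_diag_of_eq hX1 hY1 e1
  have s2 : Summable (fun i => (⟪b i, (((P*u*P)*(P*μ*Q))*(Q*v*P)) (b i)⟫ : ℂ)) :=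
    summable_diag_of_eq hX2 hQvP rfl
  have s3 : Summable (fun i => (⟪b i, ((P*u*Q)*((Q*μ*P)*(P*v*P))) (b i)⟫ : ℂ)) :=
    summable_diag_of_eq hPuQ (isHS_mul_const hμQP _) rfl
  have s4 : Summable (fun i => (⟪b i, ((P*u*Q)*((Q*μ*Q)*(Q*v*P))) (b i)⟫ : ℂ)) :=
    summable_diag_of_eq hPuQ (isHS_const_mul hQvP _) rfl
  rw [block_decomp hP hQ hPQ1,
    trB_add (summable_diag_add (summable_diag_add s1 s2) s3) s4,
    trB_add (summable_diag_add s1 s2) s3, trB_add s1 s2]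
  have E1 : trB b ((P*u*P)*((P*μ*P)*(P*v*P))) = trB b ((P*μ*P)*((P*v*P)*(P*u*P))) := by
    calc trB b ((P*u*P)*((P*μ*P)*(P*v*P)))
        = trB b (((P*u*P)*A)*(B*(P*v*P))) := by rw [e1]
      _ = trB b ((B*(P*v*P))*((P*u*P)*A)) := trB_mul_comm hX1 hY1
      _ = trB b ((B*((P*v*P)*(P*u*P)))*A) := by congr 1
      _ = trB b (A*(B*((P*v*P)*(P*u*P)))) :=
          (trB_mul_comm hA (isHS_mul_const hB _)).symm
      _ = trB b ((A*B)*((P*v*P)*(P*u*P))) := by congr 1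
      _ = trB b ((P*μ*P)*((P*v*P)*(P*u*P))) := by rw [← hAB]
  have E2 : trB b (((P*u*P)*(P*μ*Q))*(Q*v*P)) = trB b ((P*μ*Q)*((Q*v*P)*(P*u*P))) := by
    calc trB b (((P*u*P)*(P*μ*Q))*(Q*v*P))
        = trB b ((Q*v*P)*((P*u*P)*(P*μ*Q))) := trB_mul_comm hX2 hQvP
      _ = trB b (((Q*v*P)*(P*u*P))*(P*μ*Q)) := by congr 1
      _ = trB b ((P*μ*Q)*((Q*v*P)*(P*u*P))) :=
          trB_mul_comm (isHS_mul_const hQvP _) hμPQ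
  have E3 : trB b ((P*u*Q)*((Q*μ*P)*(P*v*P))) = trB b ((Q*μ*P)*((P*v*P)*(P*u*Q))) := by
    calc trB b ((P*u*Q)*((Q*μ*P)*(P*v*P)))
        = trB b (((Q*μ*P)*(P*v*P))*(P*u*Q)) := trB_mul_comm hPuQ (isHS_mul_const hμQP _)
      _ = trB b ((Q*μ*P)*((P*v*P)*(P*u*Q))) := by congr 1
  have E4 : trB b ((P*u*Q)*((Q*μ*Q)*(Q*v*P))) = trB b ((Q*μ*Q)*((Q*v*P)*(P*u*Q))) := by
    calc trB b ((P*u*Q)*((Q*μ*Q)*(Q*v*P)))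
        = trB b (((Q*μ*Q)*(Q*v*P))*(P*u*Q)) := trB_mul_comm hPuQ (isHS_const_mul hQvP _)
      _ = trB b ((Q*μ*Q)*((Q*v*P)*(P*u*Q))) := by congr 1
  rw [E1, E2, E3, E4]

end StmtAux

open StmtAux

/-- If `g` is an invertible bounded operator with `[g, P₊]`
Hilbert–Schmidt and `μ ∈ L¹_res`, then `gμg⁻¹ ∈ L¹_res` and
`Tr_res(gμg⁻¹) = Tr_res μ`. -/
theorem stmt2 [TopologicalSpace.SeparableSpace H]
    (P : H →L[ℂ] H) (hPsa : IsSelfAdjoint P) (hPidem : IsIdempotentElem P)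
    {ι : Type*} (b : HilbertBasis ι ℂ H) (g : (H →L[ℂ] H)ˣ)
    (hg : IsHS b ((g : H →L[ℂ] H) * P - P * (g : H →L[ℂ] H)))
    (μ : H →L[ℂ] H) (hμ : InL1res b P μ) :
    InL1res b P ((g : H →L[ℂ] H) * μ * ((g⁻¹ : (H →L[ℂ] H)ˣ) : H →L[ℂ] H)) ∧
      trRes b P ((g : H →L[ℂ] H) * μ * ((g⁻¹ : (H →L[ℂ] H)ˣ) : H →L[ℂ] H)) =
        trRes b P μ := by
  classical
  set u : H →L[ℂ] H := (g : H →L[ℂ] H) with hu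
  set v : H →L[ℂ] H := ((g⁻¹ : (H →L[ℂ] H)ˣ) : H →L[ℂ] H) with hv
  set Q : H →L[ℂ] H := 1 - P with hQdef
  have hP : P * P = P := hPidem
  have hQ : Q * Q = Q := by
    rw [hQdef]
    calc (1-P)*(1-P) = 1 - P - P + P*P := by noncomm_ring
      _ = 1 - P := by rw [hP]; abel
  have hPQ0 : P * Q = 0 := by
    rw [hQdef]
    calc P*(1-P) = P - P*P := by noncomm_ring
      _ = 0 := by rw [hP]; abel
  have hQP0 : Q * P = 0 := by
    rw [hQdef]
    calc (1-P)*P = P - P*P := by noncomm_ring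
      _ = 0 := by rw [hP]; abel
  have hPQ1 : P + Q = 1 := by rw [hQdef]; abel
  have huv : u * v = 1 := by rw [hu, hv]; exact g.mul_inv
  have hvu : v * u = 1 := by rw [hu, hv]; exact g.inv_mul
  have hgv : IsHS b (v * P - P * v) := by
    have e1 : v * (u * P - P * u) * v = v * u * P * v - v * P * u * v := by noncomm_ring
    have e2 : v * u * P * v = P * v := by rw [hvu, one_mul]
    have e3 : v * P * u * v = v * P := by rw [mul_assoc (v*P) u v, huv, mul_one]
    have h1 : v * (u * P - P * u) * v = P * v - v * P := by rw [e1, e2, e3]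
    have h2 : v * P - P * v = -(v * (u * P - P * u) * v) := by rw [h1, neg_sub]
    rw [h2]
    exact isHS_neg (isHS_mul_const (isHS_const_mul hg v) v)
  have hQuP : IsHS b (Q * u * P) := by
    have e : Q * u * P = (u * P - P * u) * P := by
      rw [hQdef]
      calc (1-P)*u*P = u*(P*P) - P*u*P := by rw [hP]; noncomm_ring
        _ = (u*P - P*u)*P := by noncomm_ring
    rw [e]; exact isHS_mul_const hg P
  have hPuQ : IsHS b (P * u * Q) := by
    have e : P * u * Q = -(P * (u * P - P * u)) := by
      rw [hQdef]
      calc P*u*(1-P) = (P*P)*u - P*(u*P) := by rw [hP]; noncomm_ring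
        _ = -(P * (u * P - P * u)) := by noncomm_ring
    rw [e]; exact isHS_neg (isHS_const_mul hg P)
  have hQvP : IsHS b (Q * v * P) := by
    have e : Q * v * P = (v * P - P * v) * P := by
      rw [hQdef]
      calc (1-P)*v*P = v*(P*P) - P*v*P := by rw [hP]; noncomm_ring
        _ = (v*P - P*v)*P := by noncomm_ring
    rw [e]; exact isHS_mul_const hgv P
  have hPvQ : IsHS b (P * v * Q) := by
    have e : P * v * Q = -(P * (v * P - P * v)) := by
      rw [hQdef]
      calc P*v*(1-P) = (P*P)*v - P*(v*P) := by rw [hP]; noncomm_ring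
        _ = -(P * (v * P - P * v)) := by noncomm_ring
    rw [e]; exact isHS_neg (isHS_const_mul hgv P)
  obtain ⟨hμPP, hμQQ, hμPQ, hμQP⟩ := hμ
  obtain ⟨A, B, hA, hB, hAB⟩ := hμPP
  obtain ⟨C, D, hC, hD, hCD⟩ := hμQQ
  have hμHS : IsHS b μ := by
    rw [mu_expand (μ := μ) hPQ1]
    exact isHS_add (isHS_add (isHS_add (isHS_of_isTC ⟨A, B, hA, hB, hAB⟩) hμPQ) hμQP)
      (isHS_of_isTC ⟨C, D, hC, hD, hCD⟩)
  have hPQ1' : Q + P = 1 := by rw [add_comm]; exact hPQ1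
  constructor
  · refine ⟨?_, ?_, ?_, ?_⟩
    · exact diag_isTC hP hQ hPQ1 hAB hA hB hPuQ hQvP hμPQ hμQP
    · rw [← hQdef]
      exact diag_isTC hQ hP hPQ1' hCD hC hD hQuP hPvQ hμQP hμPQ
    · rw [← hQdef]
      have e : P*(u*μ*v)*Q = (P*u)*(μ*(v*Q)) := by noncomm_ring
      rw [e]
      exact isHS_const_mul (isHS_mul_const hμHS _) _
    · rw [← hQdef]
      have e : Q*(u*μ*v)*P = (Q*u)*(μ*(v*P)) := by noncomm_ring
      rw [e]
      exact isHS_const_mul (isHS_mul_const hμHS _) _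
  · simp only [trRes, ← hQdef]
    have T1 := diag_trace (b := b) (u := u) (v := v) hP hQ hPQ1 hAB hA hB hPuQ hQvP hμPQ hμQP
    have T2 := diag_trace (b := b) (u := u) (v := v) hQ hP hPQ1' hCD hC hD hQuP hPvQ hμQP hμPQ
    rw [T1, T2]
    -- pair (P,P)
    have s1 : Summable (fun i => (⟪b i, ((P*μ*P)*((P*v*P)*(P*u*P))) (b i)⟫ : ℂ)) :=
      summable_diag_of_eq hA (isHS_mul_const hB _) (by rw [hAB]; noncomm_ring)
    have s2 : Summable (fun i => (⟪b i, ((P*μ*P)*((P*v*Q)*(Q*u*P))) (b i)⟫ : ℂ)) :=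
      summable_diag_of_eq hA (isHS_mul_const hB _) (by rw [hAB]; noncomm_ring)
    have hsumPP : (P*v*P)*(P*u*P) + (P*v*Q)*(Q*u*P) = P := by
      calc (P*v*P)*(P*u*P) + (P*v*Q)*(Q*u*P)
          = (P*v)*((P*P)*(u*P)) + (P*v)*((Q*Q)*(u*P)) := by noncomm_ring
        _ = (P*v)*(P*(u*P)) + (P*v)*(Q*(u*P)) := by rw [hP, hQ]
        _ = (P*v)*((P+Q)*(u*P)) := by noncomm_ring
        _ = (P*v)*(u*P) := by rw [hPQ1, one_mul]
        _ = P*((v*u)*P) := by noncomm_ring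
        _ = P := by rw [hvu, one_mul, hP]
    have pairPP : trB b ((P*μ*P)*((P*v*P)*(P*u*P))) + trB b ((P*μ*P)*((P*v*Q)*(Q*u*P)))
        = trB b (P*μ*P) := by
      rw [← trB_add s1 s2, ← mul_add, hsumPP, mul_assoc, hP]
    -- pair (P,Q)
    have s3 : Summable (fun i => (⟪b i, ((P*μ*Q)*((Q*v*P)*(P*u*P))) (b i)⟫ : ℂ)) :=
      summable_diag_of_eq hμPQ (isHS_mul_const hQvP _) rfl
    have s4 : Summable (fun i => (⟪b i, ((P*μ*Q)*((Q*v*Q)*(Q*u*P))) (b i)⟫ : ℂ)) :=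
      summable_diag_of_eq hμPQ (isHS_const_mul hQuP _) rfl
    have hsumPQ : (Q*v*P)*(P*u*P) + (Q*v*Q)*(Q*u*P) = 0 := by
      calc (Q*v*P)*(P*u*P) + (Q*v*Q)*(Q*u*P)
          = (Q*v)*((P*P)*(u*P)) + (Q*v)*((Q*Q)*(u*P)) := by noncomm_ring
        _ = (Q*v)*(P*(u*P)) + (Q*v)*(Q*(u*P)) := by rw [hP, hQ]
        _ = (Q*v)*((P+Q)*(u*P)) := by noncomm_ring
        _ = (Q*v)*(u*P) := by rw [hPQ1, one_mul]
        _ = Q*((v*u)*P) := by noncomm_ring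
        _ = 0 := by rw [hvu, one_mul, hQP0]
    have pairPQ : trB b ((P*μ*Q)*((Q*v*P)*(P*u*P))) + trB b ((P*μ*Q)*((Q*v*Q)*(Q*u*P)))
        = 0 := by
      rw [← trB_add s3 s4, ← mul_add, hsumPQ, mul_zero, trB_zero]
    -- pair (Q,P)
    have s5 : Summable (fun i => (⟪b i, ((Q*μ*P)*((P*v*P)*(P*u*Q))) (b i)⟫ : ℂ)) :=
      summable_diag_of_eq hμQP (isHS_const_mul hPuQ _) rfl
    have s6 : Summable (fun i => (⟪b i, ((Q*μ*P)*((P*v*Q)*(Q*u*Q))) (b i)⟫ : ℂ)) :=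
      summable_diag_of_eq hμQP (isHS_mul_const hPvQ _) rfl
    have hsumQP : (P*v*P)*(P*u*Q) + (P*v*Q)*(Q*u*Q) = 0 := by
      calc (P*v*P)*(P*u*Q) + (P*v*Q)*(Q*u*Q)
          = (P*v)*((P*P)*(u*Q)) + (P*v)*((Q*Q)*(u*Q)) := by noncomm_ring
        _ = (P*v)*(P*(u*Q)) + (P*v)*(Q*(u*Q)) := by rw [hP, hQ]
        _ = (P*v)*((P+Q)*(u*Q)) := by noncomm_ring
        _ = (P*v)*(u*Q) := by rw [hPQ1, one_mul]
        _ = P*((v*u)*Q) := by noncomm_ring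
        _ = 0 := by rw [hvu, one_mul, hPQ0]
    have pairQP : trB b ((Q*μ*P)*((P*v*P)*(P*u*Q))) + trB b ((Q*μ*P)*((P*v*Q)*(Q*u*Q)))
        = 0 := by
      rw [← trB_add s5 s6, ← mul_add, hsumQP, mul_zero, trB_zero]
    -- pair (Q,Q)
    have s7 : Summable (fun i => (⟪b i, ((Q*μ*Q)*((Q*v*P)*(P*u*Q))) (b i)⟫ : ℂ)) :=
      summable_diag_of_eq hC (isHS_mul_const hD _) (by rw [hCD]; noncomm_ring)
    have s8 : Summable (fun i => (⟪b i, ((Q*μ*Q)*((Q*v*Q)*(Q*u*Q))) (b i)⟫ : ℂ)) :=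
      summable_diag_of_eq hC (isHS_mul_const hD _) (by rw [hCD]; noncomm_ring)
    have hsumQQ : (Q*v*P)*(P*u*Q) + (Q*v*Q)*(Q*u*Q) = Q := by
      calc (Q*v*P)*(P*u*Q) + (Q*v*Q)*(Q*u*Q)
          = (Q*v)*((P*P)*(u*Q)) + (Q*v)*((Q*Q)*(u*Q)) := by noncomm_ring
        _ = (Q*v)*(P*(u*Q)) + (Q*v)*(Q*(u*Q)) := by rw [hP, hQ]
        _ = (Q*v)*((P+Q)*(u*Q)) := by noncomm_ring
        _ = (Q*v)*(u*Q) := by rw [hPQ1, one_mul]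
        _ = Q*((v*u)*Q) := by noncomm_ring
        _ = Q := by rw [hvu, one_mul, hQ]
    have pairQQ : trB b ((Q*μ*Q)*((Q*v*P)*(P*u*Q))) + trB b ((Q*μ*Q)*((Q*v*Q)*(Q*u*Q)))
        = trB b (Q*μ*Q) := by
      rw [← trB_add s7 s8, ← mul_add, hsumQQ, mul_assoc, hQ]
    linear_combination pairPP + pairPQ + pairQP + pairQQ
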